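/- Suppose the d-tuple A = (A_1, ..., A_d) of bounded operators on X is strongly stable, i.e., for every x in X the sums over words v of length N of ||A^v x||^2 tend to 0 as N tends to infinity. Then the generalized Stein equation H - A_1* H A_1 - ... - A_d* H A_d = C* C has at most one positive semidefinite bounded solution H, namely the observability gramian sum_{v in F_d} A^{v*} C* C A^v. -/

import Mathlib

open ContinuousLinearMap

noncomputable section

variable {X Y : Type*}
  [NormedAddCommGroup X] [InnerProductSpace ℂ X] [CompleteSpace X]
  [NormedAddCommGroup Y] [InnerProductSpace ℂ Y] [CompleteSpace Y]

/-- `A^v`: for a word `v = i_N … i_1` (stored as the list `[i_N, …, i_1]`), the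
product `A_{i_N} ∘ A_{i_{N-1}} ∘ ⋯ ∘ A_{i_1}`. -/
def wordProd {d : ℕ} (A : Fin d → X →L[ℂ] X) (v : List (Fin d)) : X →L[ℂ] X :=
  (v.map A).prod

/-- `A^w` for a word of length `N` encoded as a function `w : Fin N → Fin d`. -/
def funProd {d N : ℕ} (A : Fin d → X →L[ℂ] X) (w : Fin N → Fin d) : X →L[ℂ] X :=
  wordProd A (List.ofFn w)

/-! ### Auxiliary material -/

open RCLike Filter Finset

set_option linter.unusedSectionVars false

local notation "⟪" x ", " y "⟫" => @inner ℂ _ _ x y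

section PosAux

/-- Cauchy–Schwarz for the semi-inner product induced by a positive operator. -/
lemma pos_inner_sq_le (T : X →L[ℂ] X) (hT : T.IsPositive) (x y : X) :
    (re ⟪T x, y⟫) ^ 2 ≤ re ⟪T x, x⟫ * re ⟪T y, y⟫ := by
  have hsym : (T : X →ₗ[ℂ] X).IsSymmetric :=
    isSelfAdjoint_iff_isSymmetric.mp hT.isSelfAdjoint
  have key : ∀ t : ℝ, 0 ≤ re ⟪T y, y⟫ * (t * t) + (2 * re ⟪T x, y⟫) * t + re ⟪T x, x⟫ := by
    intro t
    have h0 : 0 ≤ re ⟪T (x + (t : ℂ) • y), x + (t : ℂ) • y⟫ := hT.re_inner_nonneg_left _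
    have hexp : re ⟪T (x + (t : ℂ) • y), x + (t : ℂ) • y⟫ =
        re ⟪T y, y⟫ * (t * t) + (2 * re ⟪T x, y⟫) * t + re ⟪T x, x⟫ := by
      have hyx : re ⟪T y, x⟫ = re ⟪T x, y⟫ := by
        rw [hsym.apply_clm y x, inner_re_symm]
      simp only [map_add, map_smul, inner_add_left, inner_add_right, inner_smul_left,
        inner_smul_right, Complex.conj_ofReal]
      simp only [RCLike.re_to_complex, Complex.add_re, Complex.mul_re, Complex.ofReal_re,
        Complex.ofReal_im] at hyx ⊢
      linear_combination t * hyx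
    linarith [hexp ▸ h0]
  have hd := discrim_le_zero key
  rw [discrim] at hd
  nlinarith [hd]

lemma pos_norm_sq_le (T : X →L[ℂ] X) (hT : T.IsPositive) (x : X) :
    ‖T x‖ ^ 2 ≤ ‖T‖ * re ⟪T x, x⟫ := by
  have h1 := pos_inner_sq_le T hT x (T x)
  have h2 : re ⟪T x, T x⟫ = ‖T x‖ ^ 2 := inner_self_eq_norm_sq (𝕜 := ℂ) _
  have h3 : re ⟪T (T x), T x⟫ ≤ ‖T‖ * ‖T x‖ ^ 2 := by
    calc re ⟪T (T x), T x⟫ ≤ ‖(⟪T (T x), T x⟫ : ℂ)‖ :=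
          le_trans (le_abs_self _) (abs_re_le_norm _)
      _ ≤ ‖T (T x)‖ * ‖T x‖ := norm_inner_le_norm _ _
      _ ≤ (‖T‖ * ‖T x‖) * ‖T x‖ := by
          gcongr; exact T.le_opNorm _
      _ = ‖T‖ * ‖T x‖ ^ 2 := by ring
  rw [h2] at h1
  rcases eq_or_lt_of_le (sq_nonneg ‖T x‖) with hz | hz
  · rw [← hz]
    exact mul_nonneg (norm_nonneg _) (hT.re_inner_nonneg_left x)
  · have h4 : (‖T x‖ ^ 2) * (‖T x‖ ^ 2) ≤ (‖T‖ * re ⟪T x, x⟫) * (‖T x‖ ^ 2) := by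
      nlinarith [hT.re_inner_nonneg_left x]
    exact le_of_mul_le_mul_right h4 hz

lemma pos_opNorm_le (T : X →L[ℂ] X) (hT : T.IsPositive) {c : ℝ} (hc : 0 ≤ c)
    (h : ∀ z, re ⟪T z, z⟫ ≤ c * ‖z‖ ^ 2) : ‖T‖ ≤ c := by
  have hb : ∀ z, ‖T z‖ ≤ Real.sqrt (‖T‖ * c) * ‖z‖ := by
    intro z
    have h2 : ‖T z‖ ^ 2 ≤ (‖T‖ * c) * ‖z‖ ^ 2 := by
      calc ‖T z‖ ^ 2 ≤ ‖T‖ * re ⟪T z, z⟫ := pos_norm_sq_le T hT z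
        _ ≤ ‖T‖ * (c * ‖z‖ ^ 2) := mul_le_mul_of_nonneg_left (h z) (norm_nonneg T)
        _ = (‖T‖ * c) * ‖z‖ ^ 2 := by ring
    have := Real.sqrt_le_sqrt h2
    rwa [Real.sqrt_sq (norm_nonneg _), show (‖T‖ * c) * ‖z‖ ^ 2 = (Real.sqrt (‖T‖*c)*‖z‖)^2 by
      rw [mul_pow, Real.sq_sqrt (mul_nonneg (norm_nonneg T) hc)],
      Real.sqrt_sq (by positivity)] at this
  have h5 : ‖T‖ ≤ Real.sqrt (‖T‖ * c) := T.opNorm_le_bound (Real.sqrt_nonneg _) hb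
  have h6 : ‖T‖ * ‖T‖ ≤ ‖T‖ * c := by
    calc ‖T‖ * ‖T‖ ≤ Real.sqrt (‖T‖ * c) * Real.sqrt (‖T‖ * c) :=
          mul_self_le_mul_self (norm_nonneg T) h5
      _ = ‖T‖ * c := Real.mul_self_sqrt (mul_nonneg (norm_nonneg T) hc)
  rcases eq_or_lt_of_le (norm_nonneg T) with hz | hz
  · linarith
  · exact le_of_mul_le_mul_left h6 hz

lemma isPositive_finset_sum {ι : Type*} (s : Finset ι) (f : ι → X →L[ℂ] X)
    (h : ∀ i ∈ s, (f i).IsPositive) : (∑ i ∈ s, f i).IsPositive :=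
  Finset.sum_induction f _ (fun _ _ ha hb => ha.add hb) isPositive_zero h

end PosAux

section WordAux

variable {d : ℕ}

lemma wordProd_nil (A : Fin d → X →L[ℂ] X) : wordProd A [] = 1 := rfl

lemma wordProd_cons (A : Fin d → X →L[ℂ] X) (j : Fin d) (v : List (Fin d)) :
    wordProd A (j :: v) = A j ∘L wordProd A v := by
  simp [wordProd, ContinuousLinearMap.mul_def]

lemma funProd_zero (A : Fin d → X →L[ℂ] X) (w : Fin 0 → Fin d) : funProd A w = 1 := rfl

lemma funProd_cons {N : ℕ} (A : Fin d → X →L[ℂ] X) (j : Fin d) (u : Fin N → Fin d) :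
    funProd A (Fin.cons j u) = A j ∘L funProd A u := by
  rw [funProd, List.ofFn_succ]
  simp only [Fin.cons_zero, Fin.cons_succ]
  rw [wordProd_cons]
  rfl

end WordAux

/-- the finset of all words of length `< N` -/
def listsLT (d N : ℕ) : Finset (List (Fin d)) :=
  (Finset.univ : Finset (Σ n : Fin N, Fin (n : ℕ) → Fin d)).image fun p => List.ofFn p.2

lemma mem_listsLT {d N : ℕ} (v : List (Fin d)) : v ∈ listsLT d N ↔ v.length < N := by
  constructor
  · rintro h
    obtain ⟨p, -, rfl⟩ := Finset.mem_image.mp h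
    simpa using p.1.isLt
  · intro h
    exact Finset.mem_image.mpr ⟨⟨⟨v.length, h⟩, v.get⟩, Finset.mem_univ _, List.ofFn_get v⟩

lemma sum_listsLT {d N : ℕ} {M : Type*} [AddCommMonoid M] (φ : List (Fin d) → M) :
    ∑ v ∈ listsLT d N, φ v = ∑ n ∈ Finset.range N, ∑ w : Fin n → Fin d, φ (List.ofFn w) := by
  rw [listsLT, Finset.sum_image ?hinj]
  case hinj =>
    rintro ⟨⟨m, hm⟩, f⟩ - ⟨⟨n, hn⟩, g⟩ - h
    rw [List.ofFn_inj'] at h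
    obtain ⟨h1, h2⟩ := Sigma.mk.inj_iff.mp h
    dsimp at h1
    subst h1
    obtain rfl := eq_of_heq h2
    rfl
  rw [← Fin.sum_univ_eq_sum_range (fun n => ∑ w : Fin n → Fin d, φ (List.ofFn w)) N,
    ← Finset.univ_sigma_univ, Finset.sum_sigma]

/-- the summand of the observability gramian, as an operator -/
def gram {d : ℕ} (A : Fin d → X →L[ℂ] X) (C : X →L[ℂ] Y) (v : List (Fin d)) : X →L[ℂ] X :=
  adjoint (wordProd A v) ∘L (adjoint C ∘L C) ∘L wordProd A v

/-- the tail operator `∑_{|w| = N} A^{w*} H A^w` -/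
def tailOp {d : ℕ} (A : Fin d → X →L[ℂ] X) (H : X →L[ℂ] X) (N : ℕ) : X →L[ℂ] X :=
  ∑ w : Fin N → Fin d, adjoint (funProd A w) ∘L H ∘L funProd A w

lemma gram_pos {d : ℕ} (A : Fin d → X →L[ℂ] X) (C : X →L[ℂ] Y) (v : List (Fin d)) :
    (gram A C v).IsPositive := by
  have hCC : (adjoint C ∘L C).IsPositive := by
    simpa [ContinuousLinearMap.one_def] using (isPositive_one (E := Y)).adjoint_conj C
  exact hCC.adjoint_conj _

lemma tailOp_pos {d : ℕ} (A : Fin d → X →L[ℂ] X) {H : X →L[ℂ] X} (hH : H.IsPositive) (N : ℕ) :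
    (tailOp A H N).IsPositive :=
  isPositive_finset_sum _ _ fun w _ => hH.adjoint_conj _

lemma gram_inner {d : ℕ} (A : Fin d → X →L[ℂ] X) (C : X →L[ℂ] Y) (v : List (Fin d)) (z : X) :
    re ⟪gram A C v z, z⟫ = ‖C (wordProd A v z)‖ ^ 2 := by
  have h : (⟪gram A C v z, z⟫ : ℂ) = ⟪C (wordProd A v z), C (wordProd A v z)⟫ := by
    simp only [gram, ContinuousLinearMap.comp_apply]
    rw [adjoint_inner_left, adjoint_inner_left]
  rw [h, inner_self_eq_norm_sq]

/-- The fundamental telescoping identity. -/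
lemma key_identity {d : ℕ} (A : Fin d → X →L[ℂ] X) (C : X →L[ℂ] Y) (H : X →L[ℂ] X)
    (heq : H - ∑ j, adjoint (A j) ∘L H ∘L A j = adjoint C ∘L C) (N : ℕ) (z : X) :
    H z = (∑ n ∈ Finset.range N, ∑ w : Fin n → Fin d, gram A C (List.ofFn w) z)
      + tailOp A H N z := by
  have hstein : ∀ u : X, H u = (∑ j, adjoint (A j) (H (A j u))) + adjoint C (C u) := by
    intro u
    have h1 := congrArg (fun T : X →L[ℂ] X => T u) heq
    simp only [ContinuousLinearMap.sub_apply, ContinuousLinearMap.sum_apply,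
      ContinuousLinearMap.comp_apply] at h1
    rw [sub_eq_iff_eq_add] at h1
    rw [h1]; abel
  induction N with
  | zero =>
      simp only [Finset.range_zero, Finset.sum_empty, zero_add, tailOp]
      have : ∀ w : Fin 0 → Fin d, adjoint (funProd A w) ∘L H ∘L funProd A w = H := by
        intro w
        rw [funProd_zero]
        simp [ContinuousLinearMap.one_def, adjoint_id]
      simp [this]
  | succ N ih =>
      have hstep : tailOp A H N z =
          (∑ w : Fin N → Fin d, gram A C (List.ofFn w) z) + tailOp A H (N + 1) z := by
        have h1 : tailOp A H N z =
            ∑ w : Fin N → Fin d, adjoint (funProd A w) (H (funProd A w z)) := by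
          simp [tailOp, ContinuousLinearMap.sum_apply]
        have h2 : ∀ w : Fin N → Fin d, adjoint (funProd A w) (H (funProd A w z)) =
            (∑ j, adjoint (funProd A (Fin.cons j w)) (H (funProd A (Fin.cons j w) z)))
              + gram A C (List.ofFn w) z := by
          intro w
          rw [hstein (funProd A w z), map_add, map_sum]
          congr 1
          refine Finset.sum_congr rfl fun j _ => ?_
          rw [funProd_cons, adjoint_comp]
          simp [ContinuousLinearMap.comp_apply]
        have h3 : tailOp A H (N + 1) z = ∑ w : Fin N → Fin d, ∑ j,
            adjoint (funProd A (Fin.cons j w)) (H (funProd A (Fin.cons j w) z)) := by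
          have he := Fintype.sum_equiv (Fin.consEquiv (fun _ : Fin (N + 1) => Fin d))
            (fun p : Fin d × (Fin N → Fin d) =>
              adjoint (funProd A (Fin.cons p.1 p.2)) (H (funProd A (Fin.cons p.1 p.2) z)))
            (fun w' : Fin (N + 1) → Fin d => adjoint (funProd A w') (H (funProd A w' z)))
            (fun ⟨j, u⟩ => rfl)
          simp only [tailOp, ContinuousLinearMap.sum_apply, ContinuousLinearMap.comp_apply]
          rw [← he, Fintype.sum_prod_type]
          exact Finset.sum_comm
        rw [h1, Finset.sum_congr rfl fun w _ => h2 w, Finset.sum_add_distrib, h3]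
        exact add_comm _ _
      rw [Finset.sum_range_succ, ih, hstep]
      abel

/-- If A is strongly stable then the Stein equation has at most one positive
semidefinite solution, namely the observability gramian `∑_v A^{v*} C* C A^v`. -/
theorem stmt4 {d : ℕ} (A : Fin d → X →L[ℂ] X) (C : X →L[ℂ] Y)
    (hstab : ∀ x : X, Filter.Tendsto
      (fun N => ∑ w : Fin N → Fin d, ‖funProd A w x‖ ^ 2) Filter.atTop (nhds 0)) :
    ∀ H : X →L[ℂ] X, H.IsPositive →
      H - ∑ j, adjoint (A j) ∘L H ∘L A j = adjoint C ∘L C →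
      ∀ x : X, HasSum
        (fun v : List (Fin d) => adjoint (wordProd A v) ((adjoint C) (C (wordProd A v x))))
        (H x) := by
  intro H hH heq x
  classical
  have hfun : (fun v : List (Fin d) => adjoint (wordProd A v) ((adjoint C) (C (wordProd A v x))))
      = fun v => gram A C v x := rfl
  rw [hfun]
  -- inner product of the telescoping identity
  have hkey_inner : ∀ (N : ℕ) (z : X), re ⟪H z, z⟫ =
      (∑ n ∈ Finset.range N, ∑ w : Fin n → Fin d, ‖C (funProd A w z)‖ ^ 2)
        + re ⟪tailOp A H N z, z⟫ := by
    intro N z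
    rw [key_identity A C H heq N z, inner_add_left, map_add]
    congr 1
    rw [sum_inner, map_sum]
    refine Finset.sum_congr rfl fun n _ => ?_
    rw [sum_inner, map_sum]
    exact Finset.sum_congr rfl fun w _ => gram_inner A C (List.ofFn w) z
  have hHbound : ∀ z : X, re ⟪H z, z⟫ ≤ ‖H‖ * ‖z‖ ^ 2 := by
    intro z
    calc re ⟪H z, z⟫ ≤ ‖(⟪H z, z⟫ : ℂ)‖ := le_trans (le_abs_self _) (abs_re_le_norm _)
      _ ≤ ‖H z‖ * ‖z‖ := norm_inner_le_norm _ _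
      _ ≤ (‖H‖ * ‖z‖) * ‖z‖ := by gcongr; exact H.le_opNorm z
      _ = ‖H‖ * ‖z‖ ^ 2 := by ring
  -- any finite subsum of the quadratic gramian form is dominated by ⟪Hz, z⟫
  have hform : ∀ (z : X) (u : Finset (List (Fin d))),
      ∑ v ∈ u, ‖C (wordProd A v z)‖ ^ 2 ≤ re ⟪H z, z⟫ := by
    intro z u
    set N := (u.sup fun l => l.length) + 1 with hN
    have hsub : u ⊆ listsLT d N := fun v hv =>
      (mem_listsLT v).mpr (Nat.lt_succ_of_le (Finset.le_sup hv))
    calc ∑ v ∈ u, ‖C (wordProd A v z)‖ ^ 2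
        ≤ ∑ v ∈ listsLT d N, ‖C (wordProd A v z)‖ ^ 2 :=
          Finset.sum_le_sum_of_subset_of_nonneg hsub (fun v _ _ => by positivity)
      _ = ∑ n ∈ Finset.range N, ∑ w : Fin n → Fin d, ‖C (funProd A w z)‖ ^ 2 :=
          sum_listsLT _
      _ ≤ re ⟪H z, z⟫ := by
          rw [hkey_inner N z]
          have := (tailOp_pos A hH N).re_inner_nonneg_left z
          linarith
  have hTinner : ∀ (t : Finset (List (Fin d))) (z : X),
      re ⟪(∑ v ∈ t, gram A C v) z, z⟫ = ∑ v ∈ t, ‖C (wordProd A v z)‖ ^ 2 := by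
    intro t z
    rw [ContinuousLinearMap.sum_apply, sum_inner, map_sum]
    exact Finset.sum_congr rfl fun v _ => gram_inner A C v z
  have hTpos : ∀ t : Finset (List (Fin d)), (∑ v ∈ t, gram A C v).IsPositive :=
    fun t => isPositive_finset_sum _ _ fun v _ => gram_pos A C v
  have hTnorm : ∀ t : Finset (List (Fin d)), ‖∑ v ∈ t, gram A C v‖ ≤ ‖H‖ := by
    intro t
    refine pos_opNorm_le _ (hTpos t) (norm_nonneg H) fun z => ?_
    rw [hTinner]
    exact (hform z t).trans (hHbound z)
  -- summability of the scalar series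
  have hg : Summable fun v : List (Fin d) => ‖C (wordProd A v x)‖ ^ 2 :=
    summable_of_sum_le (fun v => by positivity) fun u => hform x u
  have hfG : ∀ t : Finset (List (Fin d)),
      ∑ v ∈ t, gram A C v x = (∑ v ∈ t, gram A C v) x := by
    intro t
    rw [ContinuousLinearMap.sum_apply]
  -- summability of the vector series
  have hsummable : Summable fun v : List (Fin d) => gram A C v x := by
    rw [summable_iff_vanishing_norm]
    intro ε hε
    have hδ : (0 : ℝ) < ε ^ 2 / (‖H‖ + 1) := by positivity
    obtain ⟨s, hs⟩ := summable_iff_vanishing_norm.mp hg _ hδ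
    refine ⟨s, fun t ht => ?_⟩
    have hSnn : (0 : ℝ) ≤ ∑ v ∈ t, ‖C (wordProd A v x)‖ ^ 2 :=
      Finset.sum_nonneg fun v _ => by positivity
    have h1 : ∑ v ∈ t, ‖C (wordProd A v x)‖ ^ 2 < ε ^ 2 / (‖H‖ + 1) :=
      (le_abs_self _).trans_lt (by simpa [Real.norm_eq_abs] using hs t ht)
    have h2 : ‖∑ v ∈ t, gram A C v x‖ ^ 2 ≤ ‖H‖ * ∑ v ∈ t, ‖C (wordProd A v x)‖ ^ 2 := by
      rw [hfG]
      calc ‖(∑ v ∈ t, gram A C v) x‖ ^ 2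
          ≤ ‖∑ v ∈ t, gram A C v‖ * re ⟪(∑ v ∈ t, gram A C v) x, x⟫ :=
            pos_norm_sq_le _ (hTpos t) x
        _ = ‖∑ v ∈ t, gram A C v‖ * ∑ v ∈ t, ‖C (wordProd A v x)‖ ^ 2 := by rw [hTinner]
        _ ≤ ‖H‖ * ∑ v ∈ t, ‖C (wordProd A v x)‖ ^ 2 :=
            mul_le_mul_of_nonneg_right (hTnorm t) hSnn
    have h3 : ‖∑ v ∈ t, gram A C v x‖ ^ 2 < ε ^ 2 := by
      have heq2 : (‖H‖ + 1) * (ε ^ 2 / (‖H‖ + 1)) = ε ^ 2 := by field_simp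
      nlinarith [norm_nonneg H]
    exact lt_of_pow_lt_pow_left₀ 2 (le_of_lt hε) h3
  obtain ⟨a, ha⟩ := hsummable
  -- the tail tends to zero
  have hRnorm : ∀ N, ‖tailOp A H N‖ ≤ ‖H‖ := by
    intro N
    refine pos_opNorm_le _ (tailOp_pos A hH N) (norm_nonneg H) fun z => ?_
    have h4 := hkey_inner N z
    have h5 : (0 : ℝ) ≤ ∑ n ∈ Finset.range N, ∑ w : Fin n → Fin d, ‖C (funProd A w z)‖ ^ 2 :=
      Finset.sum_nonneg fun n _ => Finset.sum_nonneg fun w _ => by positivity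
    have h6 := hHbound z
    linarith
  have hRinner : ∀ N, re ⟪tailOp A H N x, x⟫ ≤ ‖H‖ * ∑ w : Fin N → Fin d, ‖funProd A w x‖ ^ 2 := by
    intro N
    rw [tailOp, ContinuousLinearMap.sum_apply, sum_inner, map_sum, Finset.mul_sum]
    refine Finset.sum_le_sum fun w _ => ?_
    rw [ContinuousLinearMap.comp_apply, ContinuousLinearMap.comp_apply, adjoint_inner_left]
    exact hHbound (funProd A w x)
  have hsq : ∀ N, ‖tailOp A H N x‖ ≤
      Real.sqrt (‖H‖ ^ 2 * ∑ w : Fin N → Fin d, ‖funProd A w x‖ ^ 2) := by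
    intro N
    have h6 : ‖tailOp A H N x‖ ^ 2 ≤ ‖H‖ ^ 2 * ∑ w : Fin N → Fin d, ‖funProd A w x‖ ^ 2 := by
      calc ‖tailOp A H N x‖ ^ 2 ≤ ‖tailOp A H N‖ * re ⟪tailOp A H N x, x⟫ :=
            pos_norm_sq_le _ (tailOp_pos A hH N) x
        _ ≤ ‖H‖ * (‖H‖ * ∑ w : Fin N → Fin d, ‖funProd A w x‖ ^ 2) :=
            mul_le_mul (hRnorm N) (hRinner N) ((tailOp_pos A hH N).re_inner_nonneg_left x)
              (norm_nonneg H)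
        _ = ‖H‖ ^ 2 * ∑ w : Fin N → Fin d, ‖funProd A w x‖ ^ 2 := by ring
    have h7 := Real.sqrt_le_sqrt h6
    rwa [Real.sqrt_sq (norm_nonneg _)] at h7
  have htail : Tendsto (fun N => tailOp A H N x) atTop (nhds 0) := by
    have h7 : Tendsto (fun N => ‖H‖ ^ 2 * ∑ w : Fin N → Fin d, ‖funProd A w x‖ ^ 2)
        atTop (nhds 0) := by
      simpa using (hstab x).const_mul (‖H‖ ^ 2)
    have h8 : Tendsto (fun N => Real.sqrt (‖H‖ ^ 2 * ∑ w : Fin N → Fin d, ‖funProd A w x‖ ^ 2))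
        atTop (nhds 0) := by
      have := (Real.continuous_sqrt.tendsto 0).comp h7
      simpa only [Function.comp_def, Real.sqrt_zero] using this
    exact squeeze_zero_norm hsq h8
  -- the partial sums over words of length < N
  have hmono : Monotone fun N => listsLT d N := fun M N h v hv =>
    (mem_listsLT v).mpr (lt_of_lt_of_le ((mem_listsLT v).mp hv) h)
  have hexh : ∀ v : List (Fin d), ∃ N, v ∈ listsLT d N := fun v =>
    ⟨v.length + 1, (mem_listsLT v).mpr (Nat.lt_succ_self _)⟩
  have h9 : Tendsto (fun N => ∑ v ∈ listsLT d N, gram A C v x) atTop (nhds a) :=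
    ha.comp (tendsto_atTop_finset_of_monotone hmono hexh)
  have h10 : ∀ N, ∑ v ∈ listsLT d N, gram A C v x = H x - tailOp A H N x := by
    intro N
    rw [sum_listsLT (fun v => gram A C v x), eq_sub_iff_add_eq]
    exact (key_identity A C H heq N x).symm
  have h11 : Tendsto (fun N => H x - tailOp A H N x) atTop (nhds (H x)) := by
    simpa using tendsto_const_nhds.sub htail
  have h12 : a = H x := by
    refine tendsto_nhds_unique ?_ h11
    simpa only [h10] using h9
  exact h12 ▸ ha

end
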